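/- Let Q ∈ ℝ^{m×m} be symmetric positive definite, q ∈ ℝ^m, G ∈ ℝ^{n×m}, b ∈ ℝ^n. Suppose y* ∈ ℝ^m and ζ* ∈ ℝ^n satisfy the KKT conditions of the QP min_y ½yᵀQy + qᵀy subject to Gy ≤ b, namely: Qy* + q + Gᵀζ* = 0, Gy* ≤ b, ζ* ≥ 0, and ζ*_i (Gy* − b)_i = 0 for all i. If the scalar ρ > ‖ζ*‖_∞, then y* is the unique global minimizer of the ℓ1-penalty objective ψ(y) = ½yᵀQy + qᵀy + ρ Σ_{i=1}^n max(0, (Gy − b)_i), and in particular the minimizer of ψ coincides with the optimal solution of the constrained QP. -/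

import Mathlib

open Matrix Finset

/-- exact recovery of the ℓ1 penalty method. If `(y*, ζ*)` satisfies the KKT
conditions of `min ½yᵀQy + qᵀy s.t. Gy ≤ b` (with `Q` symmetric positive definite) and
`ρ > ‖ζ*‖_∞`, then `y*` is the unique global minimizer of
`ψ(y) = ½yᵀQy + qᵀy + ρ Σᵢ max(0, (Gy − b)ᵢ)`.
Here `‖ζ*‖` is the sup norm on `Fin n → ℝ`. -/
theorem l1_exact_recovery {m n : ℕ}
    (Q : Matrix (Fin m) (Fin m) ℝ) (hQ : Q.PosDef)
    (q : Fin m → ℝ) (G : Matrix (Fin n) (Fin m) ℝ) (b : Fin n → ℝ)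
    (ystar : Fin m → ℝ) (ζstar : Fin n → ℝ)
    (hstat : Q.mulVec ystar + q + Gᵀ.mulVec ζstar = 0)
    (hprimal : ∀ i, G.mulVec ystar i ≤ b i)
    (hdual : ∀ i, 0 ≤ ζstar i)
    (hcomp : ∀ i, ζstar i * (G.mulVec ystar i - b i) = 0)
    (ρ : ℝ) (hρ : ‖ζstar‖ < ρ)
    (ψ : (Fin m → ℝ) → ℝ)
    (hψ : ψ = fun y => (1/2) * (y ⬝ᵥ Q.mulVec y) + q ⬝ᵥ y
        + ρ * ∑ i, max 0 (G.mulVec y i - b i)) :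
    (∀ y, ψ ystar ≤ ψ y) ∧ (∀ y, y ≠ ystar → ψ ystar < ψ y) := by
  subst hψ
  -- symmetry of Q
  have hsym : Qᵀ = Q := by
    have := hQ.isHermitian
    simpa [Matrix.IsHermitian, Matrix.conjTranspose_eq_transpose_of_trivial] using this
  have hQsym : ∀ u v : Fin m → ℝ, u ⬝ᵥ Q.mulVec v = v ⬝ᵥ Q.mulVec u := by
    intro u v
    rw [Matrix.dotProduct_mulVec, ← Matrix.mulVec_transpose, hsym, dotProduct_comm]
  -- the penalty term vanishes at ystar
  have hS0 : ∑ i, max 0 (G.mulVec ystar i - b i) = 0 := by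
    apply Finset.sum_eq_zero
    intro i _
    exact max_eq_left (sub_nonpos.2 (hprimal i))
  -- bound on the multipliers
  have hζρ : ∀ i, ζstar i < ρ := by
    intro i
    have h1 : ‖ζstar i‖ ≤ ‖ζstar‖ := norm_le_pi_norm ζstar i
    have h2 : ζstar i ≤ |ζstar i| := le_abs_self _
    calc ζstar i ≤ |ζstar i| := h2
      _ = ‖ζstar i‖ := (Real.norm_eq_abs _).symm
      _ ≤ ‖ζstar‖ := h1
      _ < ρ := hρ
  -- elementary penalty inequality
  have penalty : ∀ (t ζi : ℝ), 0 ≤ ζi → ζi < ρ → ζi * t ≤ ρ * max 0 t := by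
    intro t ζi h1 h2
    rcases le_total t 0 with h | h
    · rw [max_eq_left h]; nlinarith
    · rw [max_eq_right h]; nlinarith
  -- the key lower bound
  have key : ∀ y : Fin m → ℝ,
      (1/2) * (ystar ⬝ᵥ Q.mulVec ystar) + q ⬝ᵥ ystar
        + ρ * ∑ i, max 0 (G.mulVec ystar i - b i)
        + (1/2) * ((y - ystar) ⬝ᵥ Q.mulVec (y - ystar))
      ≤ (1/2) * (y ⬝ᵥ Q.mulVec y) + q ⬝ᵥ y + ρ * ∑ i, max 0 (G.mulVec y i - b i) := by
    intro y
    set d := y - ystar with hd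
    -- stationarity dotted with d
    have hstatd : Q.mulVec ystar ⬝ᵥ d + q ⬝ᵥ d + Gᵀ.mulVec ζstar ⬝ᵥ d = 0 := by
      have : (Q.mulVec ystar + q + Gᵀ.mulVec ζstar) ⬝ᵥ d = 0 := by rw [hstat]; simp
      simpa [add_dotProduct] using this
    -- expand the quadratic form
    have hquad : d ⬝ᵥ Q.mulVec d
        = y ⬝ᵥ Q.mulVec y - 2 * (ystar ⬝ᵥ Q.mulVec y) + ystar ⬝ᵥ Q.mulVec ystar := by
      rw [hd, Matrix.mulVec_sub, dotProduct_sub, sub_dotProduct,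
        sub_dotProduct, hQsym y ystar]
      ring
    -- rewrite the first stationarity term
    have h1 : Q.mulVec ystar ⬝ᵥ d = ystar ⬝ᵥ Q.mulVec y - ystar ⬝ᵥ Q.mulVec ystar := by
      rw [hd, dotProduct_comm, sub_dotProduct, hQsym y ystar, hQsym ystar ystar]
    -- rewrite the q term
    have h2 : q ⬝ᵥ d = q ⬝ᵥ y - q ⬝ᵥ ystar := by
      rw [hd, dotProduct_sub]
    -- rewrite the multiplier term
    have h3 : Gᵀ.mulVec ζstar ⬝ᵥ d = ∑ i, ζstar i * (G.mulVec y i - b i) := by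
      rw [Matrix.mulVec_transpose, ← Matrix.dotProduct_mulVec, hd, Matrix.mulVec_sub,
        dotProduct_sub]
      simp only [dotProduct]
      rw [← Finset.sum_sub_distrib]
      apply Finset.sum_congr rfl
      intro i _
      linear_combination - hcomp i
    -- penalty bound
    have hsum : ∑ i, ζstar i * (G.mulVec y i - b i)
        ≤ ρ * ∑ i, max 0 (G.mulVec y i - b i) := by
      rw [Finset.mul_sum]
      exact Finset.sum_le_sum fun i _ => penalty _ _ (hdual i) (hζρ i)
    rw [hS0]
    nlinarith [hstatd, hquad, h1, h2, h3, hsum]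
  constructor
  · intro y
    have hq0 : 0 ≤ (y - ystar) ⬝ᵥ Q.mulVec (y - ystar) := by
      have := hQ.posSemidef.dotProduct_mulVec_nonneg (y - ystar)
      simpa using this
    have := key y
    linarith
  · intro y hy
    have hne : y - ystar ≠ 0 := sub_ne_zero.2 hy
    have hq0 : 0 < (y - ystar) ⬝ᵥ Q.mulVec (y - ystar) := by
      have := hQ.dotProduct_mulVec_pos hne
      simpa using this
    have := key y
    linarith
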